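/- The class of all monounary algebras has the push-up property: for all monounary algebras A and B, if there is a monounary algebra C with C ⋖ A and C ⋖ B, then there is a monounary algebra D with A ⋖ D and B ⋖ D. -/

import Mathlib

/-- A monounary algebra: a type equipped with one unary operation. -/
structure MonoUnary : Type 1 where
  carrier : Type
  op : carrier → carrier

namespace MonoUnary

/-- The subalgebra of `A` generated by `X`: the closure of `X` under the operation. -/
def closure (A : MonoUnary) (X : Set A.carrier) : Set A.carrier :=
  {y | ∃ x ∈ X, ∃ n : ℕ, A.op^[n] x = y}

/-- Isomorphism of monounary algebras. -/
def Iso (A B : MonoUnary) : Prop :=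
  ∃ e : A.carrier ≃ B.carrier, ∀ x, e (A.op x) = B.op (e x)

/-- The monounary algebra induced on a subset closed under the operation. -/
def restrict (B : MonoUnary) (S : Set B.carrier) (hS : ∀ x ∈ S, B.op x ∈ S) : MonoUnary where
  carrier := ↥S
  op := fun x => ⟨B.op x.1, hS x.1 x.2⟩

/-- `A` is largely embeddable into `B`: `B` has a large subalgebra isomorphic to `A`,
i.e. a (nonempty, closed) subset `S` such that together with one extra element `b`
it generates the whole of `B`. -/
def LargeEmb (A B : MonoUnary) : Prop :=
  ∃ (S : Set B.carrier) (hS : ∀ x ∈ S, B.op x ∈ S), S.Nonempty ∧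
    Iso A (B.restrict S hS) ∧ ∃ b : B.carrier, B.closure (S ∪ {b}) = Set.univ

/-- One step in the network of large embeddings (symmetric closure of `⋖`). -/
def Step (A B : MonoUnary) : Prop := LargeEmb A B ∨ LargeEmb B A

/-- There is a path of length `n` between `A` and `B` in the network. -/
def HasPath (A B : MonoUnary) (n : ℕ) : Prop :=
  ∃ C : ℕ → MonoUnary, Iso (C 0) A ∧ Iso (C n) B ∧ ∀ i < n, Step (C i) (C (i + 1))

/-- The generator distance between monounary algebras, in `ℕ ∪ {∞}`. -/
noncomputable def dis (A B : MonoUnary) : ℕ∞ :=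
  sInf {q : ℕ∞ | ∃ n : ℕ, q = (n : ℕ∞) ∧ HasPath A B n}

/-- The minimum number of generators of `A`, `∞` if `A` is not finitely generated. -/
noncomputable def MGen (A : MonoUnary) : ℕ∞ :=
  sInf {q : ℕ∞ | ∃ X : Finset A.carrier, q = (X.card : ℕ∞) ∧ A.closure ↑X = Set.univ}

/-- A monounary algebra is connected iff any two elements have trajectories that meet. -/
def Connected (A : MonoUnary) : Prop :=
  ∀ a b : A.carrier, ∃ k m : ℕ, A.op^[k] a = A.op^[m] b

end MonoUnary

section GlueAux

open MonoUnary Function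

/-- Glue `B` onto `A` along a map `ψ` from a closed subset `S ⊆ B` into `A`. -/
noncomputable def MonoGlue (A B : MonoUnary) (S : Set B.carrier) (ψ : ↥S → A.carrier) :
    MonoUnary where
  carrier := A.carrier ⊕ {x : B.carrier // x ∉ S}
  op := fun z =>
    match z with
    | .inl a => .inl (A.op a)
    | .inr x =>
      haveI := Classical.dec (B.op x.1 ∈ S)
      if h : B.op x.1 ∈ S then .inl (ψ ⟨B.op x.1, h⟩) else .inr ⟨B.op x.1, h⟩

/-- The canonical embedding of `B` into the glued algebra. -/
noncomputable def monoGlueJ (A B : MonoUnary) (S : Set B.carrier) (ψ : ↥S → A.carrier) :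
    B.carrier → (MonoGlue A B S ψ).carrier := fun x =>
  haveI := Classical.dec (x ∈ S)
  if h : x ∈ S then .inl (ψ ⟨x, h⟩) else .inr ⟨x, h⟩

variable {A B : MonoUnary} {S : Set B.carrier} {ψ : ↥S → A.carrier}

theorem monoGlue_op_inl (a : A.carrier) :
    (MonoGlue A B S ψ).op (.inl a) = .inl (A.op a) := rfl

theorem monoGlueJ_semiconj (hS : ∀ x ∈ S, B.op x ∈ S)
    (hψ : ∀ (x : B.carrier) (hx : x ∈ S), ψ ⟨B.op x, hS x hx⟩ = A.op (ψ ⟨x, hx⟩)) :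
    Function.Semiconj (monoGlueJ A B S ψ) B.op (MonoGlue A B S ψ).op := by
  intro x
  by_cases hx : x ∈ S
  · have hx' : B.op x ∈ S := hS x hx
    show monoGlueJ A B S ψ (B.op x) = (MonoGlue A B S ψ).op (monoGlueJ A B S ψ x)
    rw [show monoGlueJ A B S ψ (B.op x) = .inl (ψ ⟨B.op x, hx'⟩) from dif_pos hx',
      show monoGlueJ A B S ψ x = .inl (ψ ⟨x, hx⟩) from dif_pos hx]
    rw [hψ x hx]
    rfl
  · show monoGlueJ A B S ψ (B.op x) = (MonoGlue A B S ψ).op (monoGlueJ A B S ψ x)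
    rw [show monoGlueJ A B S ψ x = .inr ⟨x, hx⟩ from dif_neg hx]
    by_cases hx' : B.op x ∈ S
    · show _ = (MonoGlue A B S ψ).op (.inr ⟨x, hx⟩)
      exact rfl
    · show _ = (MonoGlue A B S ψ).op (.inr ⟨x, hx⟩)
      exact rfl

theorem monoGlueJ_of_mem {x : B.carrier} (hx : x ∈ S) :
    monoGlueJ A B S ψ x = .inl (ψ ⟨x, hx⟩) := by
  exact dif_pos hx

theorem monoGlueJ_of_not_mem {x : B.carrier} (hx : x ∉ S) :
    monoGlueJ A B S ψ x = .inr ⟨x, hx⟩ := by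
  exact dif_neg hx

theorem monoGlueJ_injective (hψ : Function.Injective ψ) :
    Function.Injective (monoGlueJ A B S ψ) := by
  intro x y h
  by_cases hx : x ∈ S <;> by_cases hy : y ∈ S
  · rw [monoGlueJ_of_mem hx, monoGlueJ_of_mem hy] at h
    exact congrArg Subtype.val (hψ (Sum.inl_injective h))
  · rw [monoGlueJ_of_mem hx, monoGlueJ_of_not_mem hy] at h
    exact absurd h (by simp)
  · rw [monoGlueJ_of_not_mem hx, monoGlueJ_of_mem hy] at h
    exact absurd h (by simp)
  · rw [monoGlueJ_of_not_mem hx, monoGlueJ_of_not_mem hy] at h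
    exact congrArg Subtype.val (Sum.inr_injective h)

end GlueAux

/-- The class of all monounary algebras has the push-up property. -/
theorem monounary_push_up (A B C : MonoUnary)
    (hCA : MonoUnary.LargeEmb C A) (hCB : MonoUnary.LargeEmb C B) :
    ∃ D : MonoUnary, MonoUnary.LargeEmb A D ∧ MonoUnary.LargeEmb B D := by
  classical
  obtain ⟨SA, hSA, hSAne, ⟨e₁, he₁⟩, a', ha'⟩ := hCA
  obtain ⟨SB, hSB, hSBne, ⟨e₂, he₂⟩, b', hb'⟩ := hCB
  -- the transfer isomorphism between the two copies of C
  set φ : ↥SA ≃ ↥SB := e₁.symm.trans e₂ with hφdef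
  have he₁s : ∀ s : ↥SA, e₁.symm ((A.restrict SA hSA).op s) = C.op (e₁.symm s) := by
    intro s
    apply e₁.injective
    rw [Equiv.apply_symm_apply, he₁]
    exact congrArg (A.restrict SA hSA).op (e₁.apply_symm_apply s).symm
  have hφsymm : ∀ s : ↥SB,
      φ.symm ((B.restrict SB hSB).op s) = (A.restrict SA hSA).op (φ.symm s) := by
    intro s
    have he₂s : e₂.symm ((B.restrict SB hSB).op s) = C.op (e₂.symm s) := by
      apply e₂.injective
      rw [Equiv.apply_symm_apply, he₂]
      exact congrArg (B.restrict SB hSB).op (e₂.apply_symm_apply s).symm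
    show e₁ (e₂.symm _) = _
    rw [he₂s, he₁]
    rfl
  set ψ : ↥SB → A.carrier := fun s => ((φ.symm s : ↥SA) : A.carrier) with hψdef
  have hψ : ∀ (x : B.carrier) (hx : x ∈ SB), ψ ⟨B.op x, hSB x hx⟩ = A.op (ψ ⟨x, hx⟩) := by
    intro x hx
    have := congrArg Subtype.val (hφsymm ⟨x, hx⟩)
    exact this
  have hψinj : Function.Injective ψ := by
    intro s t h
    exact φ.symm.injective (Subtype.val_injective h)
  set D := MonoGlue A B SB ψ with hDdef
  set j := monoGlueJ A B SB ψ with hjdef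
  have hjsc : Function.Semiconj j B.op D.op := monoGlueJ_semiconj hSB hψ
  have hinlsc : Function.Semiconj (Sum.inl : A.carrier → D.carrier) A.op D.op :=
    fun a => rfl
  refine ⟨D, ?_, ?_⟩
  · -- A is largely embeddable into D
    refine ⟨Set.range (Sum.inl : A.carrier → D.carrier), ?_, ⟨.inl a', a', rfl⟩, ?_, ?_⟩
    · rintro _ ⟨a, rfl⟩; exact ⟨A.op a, rfl⟩
    · refine ⟨Equiv.ofInjective Sum.inl Sum.inl_injective, fun a => ?_⟩
      apply Subtype.ext
      simp only [Equiv.ofInjective_apply, MonoUnary.restrict]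
      rfl
    · refine ⟨j b', ?_⟩
      rw [Set.eq_univ_iff_forall]
      rintro (a | ⟨x, hx⟩)
      · exact ⟨.inl a, Or.inl ⟨a, rfl⟩, 0, rfl⟩
      · have hxB : x ∈ B.closure (SB ∪ {b'}) := hb' ▸ Set.mem_univ x
        obtain ⟨y, hy, n, hn⟩ := hxB
        refine ⟨j y, ?_, n, ?_⟩
        · rcases hy with hy | hy
          · exact Or.inl ⟨ψ ⟨y, hy⟩, (monoGlueJ_of_mem hy).symm⟩
          · exact Or.inr (by rw [show y = b' from hy]; exact rfl)
        · rw [← (hjsc.iterate_right n).eq, hn, hjdef, monoGlueJ_of_not_mem hx]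
  · -- B is largely embeddable into D
    have hjinj : Function.Injective j := monoGlueJ_injective hψinj
    refine ⟨Set.range j, ?_, ⟨j b', b', rfl⟩, ?_, ?_⟩
    · rintro _ ⟨x, rfl⟩; exact ⟨B.op x, hjsc x⟩
    · refine ⟨Equiv.ofInjective j hjinj, fun x => ?_⟩
      apply Subtype.ext
      simp only [Equiv.ofInjective_apply, MonoUnary.restrict]
      exact hjsc x
    · refine ⟨.inl a', ?_⟩
      rw [Set.eq_univ_iff_forall]
      rintro (a | ⟨x, hx⟩)
      · have haA : a ∈ A.closure (SA ∪ {a'}) := ha' ▸ Set.mem_univ a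
        obtain ⟨y, hy, n, hn⟩ := haA
        refine ⟨.inl y, ?_, n, ?_⟩
        · rcases hy with hy | hy
          · refine Or.inl ⟨(φ ⟨y, hy⟩ : B.carrier), ?_⟩
            rw [hjdef, monoGlueJ_of_mem (φ ⟨y, hy⟩).2]
            congr 1
            show ((φ.symm ⟨(φ ⟨y, hy⟩ : B.carrier), (φ ⟨y, hy⟩).2⟩ : ↥SA) : A.carrier) = y
            rw [Subtype.coe_eta, Equiv.symm_apply_apply]
          · exact Or.inr (by rw [show y = a' from hy]; exact rfl)
        · exact ((hinlsc.iterate_right n).eq y).symm.trans (congrArg Sum.inl hn)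
      · exact ⟨j x, Or.inl ⟨x, rfl⟩, 0, monoGlueJ_of_not_mem hx⟩
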